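/- For distinct points x, y, z in ℝⁿ, define g_z(x) = (x−z)/|x−z|. Then ⟨g_z(x) − g_z(y), x − y⟩ = (2|x−y|²/(|x−z|+|y−z|)) · cos²((∠zyx − ∠zxy)/2), where ∠zyx denotes the angle at vertex y in triangle x,y,z. -/

import Mathlib

set_option maxHeartbeats 1000000

open EuclideanGeometry

variable {E : Type*} [NormedAddCommGroup E] [InnerProductSpace ℝ E]

lemma key (u v : E) (hu : u ≠ 0) (hv : v ≠ 0) (huv : u - v ≠ 0) :
    (inner ℝ (‖u‖⁻¹ • u - ‖v‖⁻¹ • v) (u - v) : ℝ) =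
      2 * ‖u - v‖ ^ 2 / (‖u‖ + ‖v‖) *
        Real.cos ((InnerProductGeometry.angle v (v - u) -
          InnerProductGeometry.angle u (u - v)) / 2) ^ 2 := by
  set A := InnerProductGeometry.angle u (u - v) with hA
  set B := InnerProductGeometry.angle v (v - u) with hB
  set a := ‖u‖ with ha
  set b := ‖v‖ with hb
  set c := ‖u - v‖ with hc
  have ha0 : 0 < a := norm_pos_iff.mpr hu
  have hb0 : 0 < b := norm_pos_iff.mpr hv
  have hc0 : 0 < c := norm_pos_iff.mpr huv
  set r : ℝ := inner ℝ u v with hr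
  set p : ℝ := inner ℝ u (u - v) with hp
  set q : ℝ := inner ℝ v (v - u) with hq
  have hvu : ‖v - u‖ = c := by rw [← norm_neg]; congr 1; abel
  have hpr : p = a ^ 2 - r := by
    simp [hp, inner_sub_right, real_inner_self_eq_norm_sq, hr, ha]
  have hqr : q = b ^ 2 - r := by
    simp [hq, inner_sub_right, real_inner_self_eq_norm_sq, hr, real_inner_comm, hb]
  have hc2 : c ^ 2 = a ^ 2 - 2 * r + b ^ 2 := by
    rw [hc, ← real_inner_self_eq_norm_sq]
    simp [inner_sub_left, inner_sub_right, real_inner_self_eq_norm_sq, real_inner_comm, hr, ha, hb, norm_sub_sq_real]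
  -- cosines
  have hcosA : Real.cos A * (a * c) = p :=
    InnerProductGeometry.cos_angle_mul_norm_mul_norm u (u - v)
  have hcosB : Real.cos B * (b * c) = q := by
    have := InnerProductGeometry.cos_angle_mul_norm_mul_norm v (v - u)
    rwa [hvu] at this
  -- sines
  have hD : (a * c) ^ 2 - p ^ 2 = (b * c) ^ 2 - q ^ 2 := by
    rw [hpr, hqr]; nlinarith [hc2]
  have hDnn : 0 ≤ (a * c) ^ 2 - p ^ 2 := by
    have := abs_real_inner_le_norm u (u - v)
    rw [← hp, ← ha, ← hc] at this
    nlinarith [abs_nonneg p, le_abs_self p, neg_abs_le p]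
  have hsinA : Real.sin A * (a * c) = Real.sqrt ((a * c) ^ 2 - p ^ 2) := by
    have := InnerProductGeometry.sin_angle_mul_norm_mul_norm u (u - v)
    rw [real_inner_self_eq_norm_sq, real_inner_self_eq_norm_sq] at this
    rw [this]; congr 1; ring
  have hsinB : Real.sin B * (b * c) = Real.sqrt ((a * c) ^ 2 - p ^ 2) := by
    have := InnerProductGeometry.sin_angle_mul_norm_mul_norm v (v - u)
    rw [real_inner_self_eq_norm_sq, real_inner_self_eq_norm_sq, hvu] at this
    rw [this, hD]; congr 1; ring
  have hsinAB : Real.sin B * Real.sin A * (a * b * c ^ 2) = (a * c) ^ 2 - p ^ 2 := by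
    have h1 : Real.sin B * Real.sin A * (a * b * c ^ 2) =
        (Real.sin A * (a * c)) * (Real.sin B * (b * c)) := by ring
    rw [h1, hsinA, hsinB, Real.mul_self_sqrt hDnn]
  -- LHS
  have hL2 : (inner ℝ v (u - v) : ℝ) = -q := by
    simp only [hq, inner_sub_right]; ring
  have hLHS : (inner ℝ (‖u‖⁻¹ • u - ‖v‖⁻¹ • v) (u - v) : ℝ) = a⁻¹ * p + b⁻¹ * q := by
    rw [inner_sub_left, real_inner_smul_left, real_inner_smul_left, hL2, ← hp]
    ring
  rw [hLHS]
  -- RHS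
  have h2 : Real.cos ((B - A) / 2) ^ 2 = 1 / 2 + Real.cos (B - A) / 2 := by
    rw [Real.cos_sq]; ring_nf
  rw [h2, Real.cos_sub]
  have hcA : Real.cos A = p / (a * c) := by
    rw [eq_div_iff (by positivity)]; exact hcosA
  have hcB : Real.cos B = q / (b * c) := by
    rw [eq_div_iff (by positivity)]; exact hcosB
  have hsAB : Real.sin B * Real.sin A = ((a * c) ^ 2 - p ^ 2) / (a * b * c ^ 2) := by
    rw [eq_div_iff (by positivity)]; exact hsinAB
  rw [hcA, hcB, hsAB]
  have hab : 0 < a + b := by linarith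
  field_simp
  linear_combination (p - q - r + b^2 + a*b + a^2) * hpr +
    (r + a*b) * hqr + (-(a*b) - a^2) * hc2

theorem stmt0 (n : ℕ) (x y z : EuclideanSpace ℝ (Fin n))
    (hxy : x ≠ y) (hxz : x ≠ z) (hyz : y ≠ z) :
    (inner ℝ ((‖x - z‖⁻¹ • (x - z)) - (‖y - z‖⁻¹ • (y - z))) (x - y) : ℝ) =
      2 * ‖x - y‖ ^ 2 / (‖x - z‖ + ‖y - z‖) *
        Real.cos ((∠ z y x - ∠ z x y) / 2) ^ 2 := by
  have hu : x - z ≠ 0 := sub_ne_zero.mpr hxz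
  have hv : y - z ≠ 0 := sub_ne_zero.mpr hyz
  have huv : (x - z) - (y - z) ≠ 0 := by
    rw [sub_sub_sub_cancel_right]; exact sub_ne_zero.mpr hxy
  have hA : ∠ z x y = InnerProductGeometry.angle (x - z) ((x - z) - (y - z)) := by
    rw [EuclideanGeometry.angle, ← InnerProductGeometry.angle_neg_neg]
    congr 1 <;> simp [vsub_eq_sub]
  have hB : ∠ z y x = InnerProductGeometry.angle (y - z) ((y - z) - (x - z)) := by
    rw [EuclideanGeometry.angle, ← InnerProductGeometry.angle_neg_neg]
    congr 1 <;> simp [vsub_eq_sub]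
  have hxy' : x - y = (x - z) - (y - z) := by abel
  rw [hA, hB, hxy']
  exact key (x - z) (y - z) hu hv huv
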